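/- Let ω > 0, γ > 0, L > 0, and let v be defined by v_c(x) = sqrt(2ω) sech(sqrt(ω)x) on [-L,L] and v_h(x) = sqrt(2ω) sech(sqrt(ω)(x+L)) on [0,∞). Then the Nehari functional on the tadpole satisfies I(v) = ‖v'‖²_{L²} + γ|v(v)|² + ω‖v‖²_{L²} - ‖v‖⁴_{L⁴} = 2γω(1 - tanh²(sqrt(ω)L)) - 2ω^{3/2} tanh(sqrt(ω)L)(1 - tanh²(sqrt(ω)L)); in particular I(v) ≤ 0 if and only if γ ≤ sqrt(ω) tanh(sqrt(ω)L). -/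

import Mathlib

open MeasureTheory

open Real Filter in
private lemma _dummy : True := trivial
open MeasureTheory Real Filter

private lemma tanh_hasDerivAt (y : ℝ) : HasDerivAt Real.tanh (1 / Real.cosh y ^ 2) y := by
  have h := (Real.hasDerivAt_sinh y).div (Real.hasDerivAt_cosh y) (Real.cosh_pos y).ne'
  have heq : Real.tanh = fun y => Real.sinh y / Real.cosh y :=
    funext Real.tanh_eq_sinh_div_cosh
  rw [heq]
  refine h.congr_deriv ?_
  have := Real.cosh_sq_sub_sinh_sq y
  have hc := (Real.cosh_pos y).ne'
  field_simp
  linear_combination this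

private lemma tanh_sq_eq (y : ℝ) : Real.tanh y ^ 2 = 1 - 1 / Real.cosh y ^ 2 := by
  rw [Real.tanh_eq_sinh_div_cosh]
  have hc := (Real.cosh_pos y).ne'
  field_simp
  linear_combination -Real.cosh_sq_sub_sinh_sq y

private lemma continuous_tanh' : Continuous Real.tanh := by
  rw [funext Real.tanh_eq_sinh_div_cosh]
  exact Real.continuous_sinh.div Real.continuous_cosh fun x => (Real.cosh_pos x).ne'

private lemma tanh_tendsto : Tendsto Real.tanh atTop (nhds 1) := by
  have heq : ∀ x : ℝ, Real.tanh x = (1 - Real.exp (-(2*x))) / (1 + Real.exp (-(2*x))) := by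
    intro x
    rw [Real.tanh_eq_sinh_div_cosh, Real.sinh_eq, Real.cosh_eq]
    have h1 : Real.exp (-x) = (Real.exp x)⁻¹ := Real.exp_neg x
    have h2 : Real.exp (-(2*x)) = ((Real.exp x)*(Real.exp x))⁻¹ := by
      rw [show -(2*x) = -x + -x by ring, Real.exp_add, h1, mul_inv]
    have he := (Real.exp_pos x).ne'
    have hpos : (0:ℝ) < 1 + Real.exp (-(2*x)) := by positivity
    rw [h1, h2]
    field_simp
  have hlim : Tendsto (fun x : ℝ => Real.exp (-(2*x))) atTop (nhds 0) := by
    apply Real.tendsto_exp_atBot.comp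
    have h2 : Tendsto (fun x : ℝ => 2*x) atTop atTop :=
      Tendsto.const_mul_atTop two_pos tendsto_id
    exact tendsto_neg_atBot_iff.mpr h2
  have key : Tendsto (fun x : ℝ => (1 - Real.exp (-(2*x))) / (1 + Real.exp (-(2*x))))
      atTop (nhds ((1 - 0) / (1 + 0))) :=
    (tendsto_const_nhds.sub hlim).div (tendsto_const_nhds.add hlim) (by norm_num)
  have key' : Tendsto Real.tanh atTop (nhds ((1 - 0) / (1 + 0))) :=
    key.congr fun x => (heq x).symm
  simpa using key'

private lemma G_hasDerivAt (a b s d x : ℝ) :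
    HasDerivAt (fun x => a * Real.tanh (s*x+d) + b * Real.tanh (s*x+d) ^ 3)
      ((a*s + 3*b*s*Real.tanh (s*x+d)^2) / Real.cosh (s*x+d)^2) x := by
  have hin : HasDerivAt (fun x : ℝ => s*x+d) s x := by
    simpa using ((hasDerivAt_id x).const_mul s).add_const d
  have ht : HasDerivAt (fun x => Real.tanh (s*x+d)) (1 / Real.cosh (s*x+d)^2 * s) x :=
    (tanh_hasDerivAt (s*x+d)).comp (h₂ := Real.tanh) x hin
  have := (ht.const_mul a).add ((ht.pow 3).const_mul b)
  refine this.congr_deriv ?_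
  have hc := (Real.cosh_pos (s*x+d)).ne'
  field_simp
  ring

private lemma G'_continuous (a b s d : ℝ) :
    Continuous (fun x => (a*s + 3*b*s*Real.tanh (s*x+d)^2) / Real.cosh (s*x+d)^2) := by
  have hin : Continuous (fun x : ℝ => s*x+d) := by continuity
  exact ((continuous_const.add (continuous_const.mul ((continuous_tanh'.comp hin).pow 2))).div
    ((Real.continuous_cosh.comp hin).pow 2) fun x => (pow_ne_zero 2 (Real.cosh_pos _).ne'))

private lemma loop_integral (a b s L : ℝ) :
    (∫ x in (-L)..L, (a*s + 3*b*s*Real.tanh (s*x)^2) / Real.cosh (s*x)^2)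
      = 2*a*Real.tanh (s*L) + 2*b*Real.tanh (s*L)^3 := by
  have := intervalIntegral.integral_eq_sub_of_hasDerivAt
    (f := fun x => a * Real.tanh (s*x+0) + b * Real.tanh (s*x+0) ^ 3)
    (f' := fun x => (a*s + 3*b*s*Real.tanh (s*x+0)^2) / Real.cosh (s*x+0)^2)
    (a := -L) (b := L) (fun x _ => G_hasDerivAt a b s 0 x)
    ((G'_continuous a b s 0).intervalIntegrable _ _)
  simp only [add_zero] at this
  rw [this]
  rw [mul_neg, Real.tanh_neg]
  ring

private lemma half_integral (a b s d : ℝ) (hs : 0 < s)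
    (hnn : ∀ x : ℝ, 0 ≤ (a*s + 3*b*s*Real.tanh (s*x+d)^2) / Real.cosh (s*x+d)^2) :
    (∫ x in Set.Ioi (0:ℝ), (a*s + 3*b*s*Real.tanh (s*x+d)^2) / Real.cosh (s*x+d)^2)
      = (a + b) - (a * Real.tanh d + b * Real.tanh d ^ 3) := by
  have hlim : Tendsto (fun x => a * Real.tanh (s*x+d) + b * Real.tanh (s*x+d) ^ 3)
      atTop (nhds (a * 1 + b * 1 ^ 3)) := by
    have hinner : Tendsto (fun x : ℝ => s*x+d) atTop atTop :=
      tendsto_atTop_add_const_right _ d (tendsto_id.const_mul_atTop hs)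
    have ht : Tendsto (fun x => Real.tanh (s*x+d)) atTop (nhds 1) :=
      tanh_tendsto.comp hinner
    exact (ht.const_mul a).add ((ht.pow 3).const_mul b)
  have := integral_Ioi_of_hasDerivAt_of_nonneg' (a := (0:ℝ))
    (g := fun x => a * Real.tanh (s*x+d) + b * Real.tanh (s*x+d) ^ 3)
    (g' := fun x => (a*s + 3*b*s*Real.tanh (s*x+d)^2) / Real.cosh (s*x+d)^2)
    (fun x _ => G_hasDerivAt a b s d x) (fun x _ => hnn x) hlim
  rw [this]
  norm_num

private lemma final_eq (ω γ s c T : ℝ) (hs0 : 0 < s) (hsq : s ^ 2 = ω) (hc2 : c ^ 2 = 2 * ω)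
    (hc4 : c ^ 4 = 4 * ω ^ 2) :
    2 * 0 * T + 2 * (c ^ 2 * s / 3) * T ^ 3 + ((0 + c ^ 2 * s / 3) - (0 * T + (c ^ 2 * s / 3) * T ^ 3))
      + γ * (c ^ 2 * (1 - T ^ 2))
      + ω * ((2 * (c ^ 2 / s) * T + 2 * 0 * T ^ 3) + ((c ^ 2 / s + 0) - ((c ^ 2 / s) * T + 0 * T ^ 3)))
      - ((2 * (c ^ 4 / s) * T + 2 * (-(c ^ 4 / (3 * s))) * T ^ 3)
          + ((c ^ 4 / s + -(c ^ 4 / (3 * s))) - ((c ^ 4 / s) * T + (-(c ^ 4 / (3 * s))) * T ^ 3)))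
      = 2 * γ * ω * (1 - T ^ 2) - 2 * (ω * s) * T * (1 - T ^ 2) := by
  rw [hc2, hc4, ← hsq]
  have hs' : s ≠ 0 := hs0.ne'
  field_simp
  ring

private lemma final_iff (ω γ s T : ℝ) (hω : 0 < ω) (hTpos : 0 < 1 - T ^ 2) :
    (2 * γ * ω * (1 - T ^ 2) - 2 * (ω * s) * T * (1 - T ^ 2) ≤ 0 ↔ γ ≤ s * T) := by
  constructor
  · intro h
    nlinarith [mul_pos hω hTpos]
  · intro h
    nlinarith [mul_pos hω hTpos]



theorem stmt_14 (ω γ L : ℝ) (hω : 0 < ω) (hγ : 0 < γ) (hL : 0 < L)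
    (vc vh : ℝ → ℝ)
    (hvc : vc = fun x : ℝ => Real.sqrt (2 * ω) / Real.cosh (Real.sqrt ω * x))
    (hvh : vh = fun x : ℝ => Real.sqrt (2 * ω) / Real.cosh (Real.sqrt ω * (x + L))) :
    ((∫ x in (-L)..L, deriv vc x ^ 2) + (∫ x in Set.Ioi (0 : ℝ), deriv vh x ^ 2)
        + γ * |vh 0| ^ 2
        + ω * ((∫ x in (-L)..L, vc x ^ 2) + ∫ x in Set.Ioi (0 : ℝ), vh x ^ 2)
        - ((∫ x in (-L)..L, vc x ^ 4) + ∫ x in Set.Ioi (0 : ℝ), vh x ^ 4))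
      = 2 * γ * ω * (1 - Real.tanh (Real.sqrt ω * L) ^ 2)
        - 2 * (ω * Real.sqrt ω) * Real.tanh (Real.sqrt ω * L)
          * (1 - Real.tanh (Real.sqrt ω * L) ^ 2) ∧
    (2 * γ * ω * (1 - Real.tanh (Real.sqrt ω * L) ^ 2)
        - 2 * (ω * Real.sqrt ω) * Real.tanh (Real.sqrt ω * L)
          * (1 - Real.tanh (Real.sqrt ω * L) ^ 2) ≤ 0
      ↔ γ ≤ Real.sqrt ω * Real.tanh (Real.sqrt ω * L)) := by
  have hs0 : 0 < Real.sqrt ω := Real.sqrt_pos.mpr hω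
  set s := Real.sqrt ω with hs
  set c := Real.sqrt (2 * ω) with hcdef
  have hsq : s ^ 2 = ω := Real.sq_sqrt hω.le
  have hc2 : c ^ 2 = 2 * ω := Real.sq_sqrt (by positivity)
  have hc4 : c ^ 4 = 4 * ω ^ 2 := by
    rw [show c ^ 4 = (c ^ 2) ^ 2 by ring, hc2]; ring
  set T := Real.tanh (s * L) with hT
  have hT2 : T ^ 2 = 1 - 1 / Real.cosh (s * L) ^ 2 := tanh_sq_eq (s * L)
  have hTpos : 0 < 1 - T ^ 2 := by
    rw [hT2]
    have := Real.cosh_pos (s * L)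
    have h1 : (0:ℝ) < 1 / Real.cosh (s * L) ^ 2 := by positivity
    linarith
  clear_value s c T
  -- derivative of vc
  have hdc : ∀ x : ℝ, HasDerivAt vc (-(c * s * Real.sinh (s * x)) / Real.cosh (s * x) ^ 2) x := by
    intro x
    have hin : HasDerivAt (fun x : ℝ => s * x) s x := by
      simpa using (hasDerivAt_id x).const_mul s
    have hch : HasDerivAt (fun x : ℝ => Real.cosh (s * x)) (Real.sinh (s * x) * s) x :=
      (Real.hasDerivAt_cosh (s * x)).comp x hin
    have hinv := (hch.inv (Real.cosh_pos (s * x)).ne').const_mul c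
    have heqf : vc = fun y : ℝ => c * (Real.cosh (s * y))⁻¹ := by
      rw [hvc]; funext y; rw [div_eq_mul_inv]
    rw [heqf]
    refine hinv.congr_deriv ?_
    have := (Real.cosh_pos (s * x)).ne'
    field_simp
  have hdh : ∀ x : ℝ, HasDerivAt vh (-(c * s * Real.sinh (s * x + s * L)) / Real.cosh (s * x + s * L) ^ 2) x := by
    intro x
    have hin : HasDerivAt (fun x : ℝ => s * x + s * L) s x := by
      simpa using ((hasDerivAt_id x).const_mul s).add_const (s * L)
    have hch : HasDerivAt (fun x : ℝ => Real.cosh (s * x + s * L)) (Real.sinh (s * x + s * L) * s) x :=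
      (Real.hasDerivAt_cosh (s * x + s * L)).comp (h₂ := Real.cosh) x hin
    have hinv := (hch.inv (Real.cosh_pos (s * x + s * L)).ne').const_mul c
    have heqf : vh = fun y : ℝ => c * (Real.cosh (s * y + s * L))⁻¹ := by
      rw [hvh]; funext y
      rw [div_eq_mul_inv, show s * (y + L) = s * y + s * L by ring]
    rw [heqf]
    refine hinv.congr_deriv ?_
    have := (Real.cosh_pos (s * x + s * L)).ne'
    field_simp
  -- loop kinetic
  have e1 : (∫ x in (-L)..L, deriv vc x ^ 2)
      = 2 * 0 * T + 2 * (c ^ 2 * s / 3) * T ^ 3 := by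
    have hpt : ∀ x : ℝ, deriv vc x ^ 2
        = (0 * s + 3 * (c ^ 2 * s / 3) * s * Real.tanh (s * x) ^ 2) / Real.cosh (s * x) ^ 2 := by
      intro x
      rw [(hdc x).deriv, Real.tanh_eq_sinh_div_cosh]
      have := (Real.cosh_pos (s * x)).ne'
      field_simp
      ring
    rw [show (fun x : ℝ => deriv vc x ^ 2)
        = fun x : ℝ => (0 * s + 3 * (c ^ 2 * s / 3) * s * Real.tanh (s * x) ^ 2)
            / Real.cosh (s * x) ^ 2 from funext hpt]
    rw [hT]
    exact loop_integral 0 (c ^ 2 * s / 3) s L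
  -- half kinetic
  have e2 : (∫ x in Set.Ioi (0 : ℝ), deriv vh x ^ 2)
      = (0 + c ^ 2 * s / 3) - (0 * T + (c ^ 2 * s / 3) * T ^ 3) := by
    have hpt : ∀ x : ℝ, deriv vh x ^ 2
        = (0 * s + 3 * (c ^ 2 * s / 3) * s * Real.tanh (s * x + s * L) ^ 2)
            / Real.cosh (s * x + s * L) ^ 2 := by
      intro x
      rw [(hdh x).deriv, Real.tanh_eq_sinh_div_cosh]
      have := (Real.cosh_pos (s * x + s * L)).ne'
      field_simp
      ring
    rw [show (fun x : ℝ => deriv vh x ^ 2)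
        = fun x : ℝ => (0 * s + 3 * (c ^ 2 * s / 3) * s * Real.tanh (s * x + s * L) ^ 2)
            / Real.cosh (s * x + s * L) ^ 2 from funext hpt]
    rw [hT]
    exact half_integral 0 (c ^ 2 * s / 3) s (s * L) hs0 (by
      intro x
      have hc' := Real.cosh_pos (s * x + s * L)
      apply div_nonneg _ (by positivity)
      nlinarith [sq_nonneg (c * s * Real.tanh (s * x + s * L))])
  -- loop mass
  have e3 : (∫ x in (-L)..L, vc x ^ 2) = 2 * (c ^ 2 / s) * T + 2 * 0 * T ^ 3 := by
    have hpt : ∀ x : ℝ, vc x ^ 2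
        = ((c ^ 2 / s) * s + 3 * 0 * s * Real.tanh (s * x) ^ 2) / Real.cosh (s * x) ^ 2 := by
      intro x
      simp only [hvc]
      have := (Real.cosh_pos (s * x)).ne'
      field_simp
      ring
    rw [show (fun x : ℝ => vc x ^ 2)
        = fun x : ℝ => ((c ^ 2 / s) * s + 3 * 0 * s * Real.tanh (s * x) ^ 2)
            / Real.cosh (s * x) ^ 2 from funext hpt]
    rw [hT]
    exact loop_integral (c ^ 2 / s) 0 s L
  -- half mass
  have e4 : (∫ x in Set.Ioi (0 : ℝ), vh x ^ 2)
      = (c ^ 2 / s + 0) - ((c ^ 2 / s) * T + 0 * T ^ 3) := by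
    have hpt : ∀ x : ℝ, vh x ^ 2
        = ((c ^ 2 / s) * s + 3 * 0 * s * Real.tanh (s * x + s * L) ^ 2)
            / Real.cosh (s * x + s * L) ^ 2 := by
      intro x
      simp only [hvh]
      rw [show s * (x + L) = s * x + s * L by ring]
      have := (Real.cosh_pos (s * x + s * L)).ne'
      field_simp
      ring
    rw [show (fun x : ℝ => vh x ^ 2)
        = fun x : ℝ => ((c ^ 2 / s) * s + 3 * 0 * s * Real.tanh (s * x + s * L) ^ 2)
            / Real.cosh (s * x + s * L) ^ 2 from funext hpt]
    rw [hT]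
    exact half_integral (c ^ 2 / s) 0 s (s * L) hs0 (by
      intro x
      have hc' := Real.cosh_pos (s * x + s * L)
      have hnum : (0:ℝ) ≤ (c ^ 2 / s) * s + 3 * 0 * s * Real.tanh (s * x + s * L) ^ 2 := by
        have h1 : (0:ℝ) ≤ (c ^ 2 / s) * s := by positivity
        nlinarith
      exact div_nonneg hnum (by positivity))
  -- loop quartic
  have e5 : (∫ x in (-L)..L, vc x ^ 4)
      = 2 * (c ^ 4 / s) * T + 2 * (-(c ^ 4 / (3 * s))) * T ^ 3 := by
    have hpt : ∀ x : ℝ, vc x ^ 4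
        = ((c ^ 4 / s) * s + 3 * (-(c ^ 4 / (3 * s))) * s * Real.tanh (s * x) ^ 2)
            / Real.cosh (s * x) ^ 2 := by
      intro x
      simp only [hvc]
      rw [tanh_sq_eq (s * x)]
      have := (Real.cosh_pos (s * x)).ne'
      have hs' : s ≠ 0 := hs0.ne'
      field_simp
      ring
    rw [show (fun x : ℝ => vc x ^ 4)
        = fun x : ℝ => ((c ^ 4 / s) * s + 3 * (-(c ^ 4 / (3 * s))) * s * Real.tanh (s * x) ^ 2)
            / Real.cosh (s * x) ^ 2 from funext hpt]
    rw [hT]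
    exact loop_integral (c ^ 4 / s) (-(c ^ 4 / (3 * s))) s L
  -- half quartic
  have e6 : (∫ x in Set.Ioi (0 : ℝ), vh x ^ 4)
      = (c ^ 4 / s + -(c ^ 4 / (3 * s)))
          - ((c ^ 4 / s) * T + (-(c ^ 4 / (3 * s))) * T ^ 3) := by
    have hpt : ∀ x : ℝ, vh x ^ 4
        = ((c ^ 4 / s) * s + 3 * (-(c ^ 4 / (3 * s))) * s * Real.tanh (s * x + s * L) ^ 2)
            / Real.cosh (s * x + s * L) ^ 2 := by
      intro x
      simp only [hvh]
      rw [show s * (x + L) = s * x + s * L by ring, tanh_sq_eq (s * x + s * L)]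
      have := (Real.cosh_pos (s * x + s * L)).ne'
      have hs' : s ≠ 0 := hs0.ne'
      field_simp
      ring
    rw [show (fun x : ℝ => vh x ^ 4)
        = fun x : ℝ => ((c ^ 4 / s) * s + 3 * (-(c ^ 4 / (3 * s))) * s * Real.tanh (s * x + s * L) ^ 2)
            / Real.cosh (s * x + s * L) ^ 2 from funext hpt]
    rw [hT]
    exact half_integral (c ^ 4 / s) (-(c ^ 4 / (3 * s))) s (s * L) hs0 (by
      intro x
      have hc' := Real.cosh_pos (s * x + s * L)
      have ht2 : Real.tanh (s * x + s * L) ^ 2 ≤ 1 := by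
        rw [tanh_sq_eq (s * x + s * L)]
        have : (0:ℝ) ≤ 1 / Real.cosh (s * x + s * L) ^ 2 := by positivity
        linarith
      apply div_nonneg _ (by positivity)
      have hs' : s ≠ 0 := hs0.ne'
      have hnum : (c ^ 4 / s) * s + 3 * (-(c ^ 4 / (3 * s))) * s * Real.tanh (s * x + s * L) ^ 2
          = c ^ 4 * (1 - Real.tanh (s * x + s * L) ^ 2) := by
        field_simp
        ring
      rw [hnum]
      have hc4n : (0:ℝ) ≤ c ^ 4 := by positivity
      nlinarith)
  -- vertex term
  have e7 : |vh 0| ^ 2 = c ^ 2 * (1 - T ^ 2) := by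
    have h0 : vh 0 = c / Real.cosh (s * L) := by rw [hvh]; norm_num
    rw [sq_abs, h0, div_pow, show (1:ℝ) - T ^ 2 = 1 / Real.cosh (s * L) ^ 2 by rw [hT2]; ring]
    have := (Real.cosh_pos (s * L)).ne'
    field_simp
  rw [e1, e2, e3, e4, e5, e6, e7]
  exact ⟨final_eq ω γ s c T hs0 hsq hc2 hc4, final_iff ω γ s T hω hTpos⟩
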